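/- Let W be a K×K real matrix that is nonnegative, nonincreasing in the row index (w(i+1,k) ≤ w(i,k)), and supermodular (w(i+1,k+1) − w(i,k+1) − w(i+1,k) + w(i,k) ≥ 0). Then for any bundle A = {k_1 < k_2 < ... < k_L} ⊆ {1,...,K}, the assignment σ_i = k_i for 1 ≤ i ≤ L achieves the maximum total weight over all assignments of the goods in A to distinct rows (buyers), where unassigned buyers get weight 0. -/

import Mathlib

section
variable {K : ℕ} (W : Fin K → Fin K → ℝ)


lemma rows_anti
    (hmono : ∀ (i k : Fin K) (h : i.val + 1 < K), W ⟨i.val + 1, h⟩ k ≤ W i k) :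
    ∀ (i j : Fin K), i ≤ j → ∀ k, W j k ≤ W i k := by
  have H : ∀ (d : ℕ) (i : Fin K) (h : i.val + d < K) (k : Fin K),
      W ⟨i.val + d, h⟩ k ≤ W i k := by
    intro d
    induction d with
    | zero => intro i h k; simp
    | succ d ih =>
      intro i h k
      have h1 : i.val + d < K := by omega
      exact le_trans (hmono ⟨i.val + d, h1⟩ k h) (ih i h1 k)
  intro i j hij k
  have hj : j = ⟨i.val + (j.val - i.val), by omega⟩ := by
    apply Fin.ext; simp; omega
  rw [hj]; exact H _ i _ k

lemma super_gen
    (hsuper : ∀ (i k : Fin K) (hi : i.val + 1 < K) (hk : k.val + 1 < K),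
      W i ⟨k.val + 1, hk⟩ + W ⟨i.val + 1, hi⟩ k ≤
        W i k + W ⟨i.val + 1, hi⟩ ⟨k.val + 1, hk⟩) :
    ∀ (i j k l : Fin K), i ≤ j → k ≤ l →
      W i l + W j k ≤ W i k + W j l := by
  -- adjacent columns, general rows (by distance)
  have A1 : ∀ (d : ℕ) (i : Fin K) (hd : i.val + d < K) (k : Fin K) (hk : k.val + 1 < K),
      W i ⟨k.val + 1, hk⟩ + W ⟨i.val + d, hd⟩ k ≤
        W i k + W ⟨i.val + d, hd⟩ ⟨k.val + 1, hk⟩ := by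
    intro d
    induction d with
    | zero => intro i hd k hk; simp; linarith
    | succ d ih =>
      intro i hd k hk
      have h1 : i.val + d < K := by omega
      have step := hsuper ⟨i.val + d, h1⟩ k hd hk
      have prev := ih i h1 k hk
      have eq1 : (⟨(⟨i.val + d, h1⟩ : Fin K).val + 1, hd⟩ : Fin K) = ⟨i.val + (d+1), hd⟩ := rfl
      rw [eq1] at step
      linarith
  have A2 : ∀ (i j : Fin K), i ≤ j → ∀ (k : Fin K) (hk : k.val + 1 < K),
      W i ⟨k.val + 1, hk⟩ + W j k ≤ W i k + W j ⟨k.val + 1, hk⟩ := by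
    intro i j hij k hk
    have hj : j = ⟨i.val + (j.val - i.val), by omega⟩ := by
      apply Fin.ext; simp; omega
    rw [hj]; exact A1 _ i _ k hk
  have B1 : ∀ (e : ℕ) (k : Fin K) (he : k.val + e < K) (i j : Fin K), i ≤ j →
      W i ⟨k.val + e, he⟩ + W j k ≤ W i k + W j ⟨k.val + e, he⟩ := by
    intro e
    induction e with
    | zero => intro k he i j hij; simp
    | succ e ih =>
      intro k he i j hij
      have h1 : k.val + e < K := by omega
      have prev := ih k h1 i j hij
      have step := A2 i j hij ⟨k.val + e, h1⟩ he
      have eq1 : (⟨(⟨k.val + e, h1⟩ : Fin K).val + 1, he⟩ : Fin K) = ⟨k.val + (e+1), he⟩ := rfl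
      rw [eq1] at step
      linarith
  intro i j k l hij hkl
  have hl : l = ⟨k.val + (l.val - k.val), by omega⟩ := by
    apply Fin.ext; simp; omega
  rw [hl]; exact B1 _ k _ i j hij



lemma rearrange
    (hS : ∀ (i j k l : Fin K), i ≤ j → k ≤ l → W i l + W j k ≤ W i k + W j l) :
    ∀ (n : ℕ) (f b : Fin n → Fin K), StrictMono f → StrictMono b →
      ∀ p : Fin n → Fin n, Function.Injective p →
      ∑ t, W (f t) (b (p t)) ≤ ∑ t, W (f t) (b t) := by
  intro n
  induction n with
  | zero => intro f b _ _ p _; simp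
  | succ n ih =>
    intro f b hf hb p hp
    -- find j with p j = 0
    have hsurj : Function.Surjective p := Finite.surjective_of_injective hp
    obtain ⟨j, hj⟩ := hsurj 0
    set q : Fin (n+1) → Fin (n+1) := p ∘ (Equiv.swap 0 j) with hq
    have hq0 : q 0 = 0 := by simp [hq, Equiv.swap_apply_left, hj]
    have hqinj : Function.Injective q := hp.comp (Equiv.swap 0 j).injective
    have step1 : ∑ t, W (f t) (b (p t)) ≤ ∑ t, W (f t) (b (q t)) := by
      by_cases hj0 : j = 0
      · subst hj0
        simp [hq]
      · -- sums differ only at 0 and j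
        have hmem : j ∈ (Finset.univ : Finset (Fin (n+1))).erase 0 :=
          Finset.mem_erase.mpr ⟨hj0, Finset.mem_univ j⟩
        have hsplit : ∀ (F : Fin (n+1) → ℝ),
            ∑ t, F t = F 0 + (F j + ∑ t ∈ (Finset.univ.erase 0).erase j, F t) := by
          intro F
          rw [← Finset.add_sum_erase _ F (Finset.mem_univ 0),
            ← Finset.add_sum_erase _ F hmem]
        rw [hsplit (fun t => W (f t) (b (p t))), hsplit (fun t => W (f t) (b (q t)))]
        have hrest : ∑ t ∈ (Finset.univ.erase 0).erase j, W (f t) (b (p t))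
            = ∑ t ∈ (Finset.univ.erase 0).erase j, W (f t) (b (q t)) := by
          apply Finset.sum_congr rfl
          intro t ht
          simp only [Finset.mem_erase] at ht
          rw [show q t = p t by simp [hq, Equiv.swap_apply_of_ne_of_ne ht.2.1 ht.1]]
        rw [hrest]
        have hq0' : q 0 = 0 := hq0
        have hqj : q j = p 0 := by simp [hq, Equiv.swap_apply_right]
        have hp0 : p 0 ≠ 0 := by
          intro h; exact hj0 (hp (hj.trans h.symm))
        have hkey : W (f 0) (b (p 0)) + W (f j) (b 0) ≤
            W (f 0) (b 0) + W (f j) (b (p 0)) := by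
          apply hS
          · exact le_of_lt (hf (by exact Fin.pos_iff_ne_zero.mpr hj0 : (0:Fin (n+1)) < j))
          · exact le_of_lt (hb (Fin.pos_iff_ne_zero.mpr hp0))
        rw [hj, hq0', hqj]
        linarith
    refine le_trans step1 ?_
    -- now q fixes 0; restrict
    have hne0 : ∀ t : Fin n, q t.succ ≠ 0 := by
      intro t h
      have : t.succ = 0 := hqinj (h.trans hq0.symm)
      exact (Fin.succ_ne_zero t) this
    set r : Fin n → Fin n := fun t => (q t.succ).pred (hne0 t) with hr
    have hrq : ∀ t : Fin n, q t.succ = (r t).succ := by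
      intro t; simp [hr]
    have hrinj : Function.Injective r := by
      intro s t h
      have : q s.succ = q t.succ := by rw [hrq, hrq, h]
      exact Fin.succ_injective n (hqinj this)
    rw [Fin.sum_univ_succ, Fin.sum_univ_succ, hq0]
    have hIH := ih (f ∘ Fin.succ) (b ∘ Fin.succ)
      (hf.comp (Fin.strictMono_succ)) (hb.comp (Fin.strictMono_succ)) r hrinj
    simp only [Function.comp] at hIH
    have : ∑ t : Fin n, W (f t.succ) (b (q t.succ)) = ∑ t : Fin n, W (f t.succ) (b ((r t).succ)) := by
      apply Finset.sum_congr rfl; intro t _; rw [hrq]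
    rw [this]
    linarith



lemma strictmono_le_apply {n : ℕ} (g : Fin n → Fin K) (hg : StrictMono g) :
    ∀ t : Fin n, t.val ≤ (g t).val := by
  intro t
  obtain ⟨x, hx⟩ := t
  induction x with
  | zero => simp
  | succ x ih =>
    have hx' : x < n := by omega
    have h1 := ih hx'
    have h2 : g ⟨x, hx'⟩ < g ⟨x+1, hx⟩ := hg (by simp [Fin.lt_def])
    have := Fin.lt_def.mp h2
    have e1 : ((⟨x, hx'⟩ : Fin n)).val = x := rfl
    have e2 : ((⟨x+1, hx⟩ : Fin n)).val = x+1 := rfl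
    omega

lemma main_opt
    (hA : ∀ (i j : Fin K), i ≤ j → ∀ k, W j k ≤ W i k)
    (_hS : ∀ (i j k l : Fin K), i ≤ j → k ≤ l → W i l + W j k ≤ W i k + W j l)
    (hR : ∀ (n : ℕ) (f b : Fin n → Fin K), StrictMono f → StrictMono b →
      ∀ p : Fin n → Fin n, Function.Injective p →
      ∑ t, W (f t) (b (p t)) ≤ ∑ t, W (f t) (b t))
    (n : ℕ) (hn : n ≤ K) (b : Fin n → Fin K) (hb : StrictMono b)
    (m : Fin n → Fin K) (hm : Function.Injective m) :
    ∑ t, W (m t) (b t) ≤ ∑ t, W (Fin.castLE hn t) (b t) := by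
  set π := Tuple.sort m with hπ
  have hmπ : Monotone (m ∘ π) := Tuple.monotone_sort m
  have hg : StrictMono (m ∘ π) := hmπ.strictMono_of_injective (hm.comp π.injective)
  have hf : StrictMono (Fin.castLE hn) := fun s t h => h
  have e1 : ∑ t, W (m t) (b t) = ∑ t, W (m (π t)) (b (π t)) :=
    (Equiv.sum_comp π (fun t => W (m t) (b t))).symm
  rw [e1]
  have step1 : ∑ t, W (m (π t)) (b (π t)) ≤ ∑ t, W (Fin.castLE hn t) (b (π t)) := by
    apply Finset.sum_le_sum
    intro t _
    apply hA
    exact Fin.le_def.mpr (strictmono_le_apply (m ∘ π) hg t)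
  refine le_trans step1 ?_
  exact hR n (Fin.castLE hn) b hf hb π π.injective


end

theorem monotone_assignment_optimal {K : ℕ} (W : Fin K → Fin K → ℝ)
    (hnn : ∀ i k : Fin K, 0 ≤ W i k)
    (hmono : ∀ (i k : Fin K) (h : i.val + 1 < K), W ⟨i.val + 1, h⟩ k ≤ W i k)
    (hsuper : ∀ (i k : Fin K) (hi : i.val + 1 < K) (hk : k.val + 1 < K),
      W i ⟨k.val + 1, hk⟩ + W ⟨i.val + 1, hi⟩ k ≤
        W i k + W ⟨i.val + 1, hi⟩ ⟨k.val + 1, hk⟩)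
    (A : Finset (Fin K))
    (σ : Fin K → Option (Fin K))
    (hσA : ∀ (i : Fin K) (x : Fin K), σ i = some x → x ∈ A)
    (hinj : ∀ (i i' : Fin K) (x : Fin K), σ i = some x → σ i' = some x → i = i') :
    ∑ i : Fin K, (σ i).elim 0 (W i) ≤
      ∑ t : Fin A.card,
        W (Fin.castLE (by simpa using A.card_le_univ) t) (A.orderIsoOfFin rfl t) := by
  classical
  obtain rfl | hK := Nat.eq_zero_or_pos K
  · have hA0 : A = ∅ := Finset.eq_empty_of_isEmpty A
    subst hA0
    simp
    exact Finset.sum_nonneg (fun t _ => hnn _ _)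
  have _inst : Nonempty (Fin K) := ⟨⟨0, hK⟩⟩
  have hA := rows_anti W hmono
  have hS := super_gen W hsuper
  have hR := rearrange W hS
  have hLK : A.card ≤ K := by simpa using A.card_le_univ
  set L := A.card with hLdef
  set e := A.orderIsoOfFin rfl with hedef
  set b : Fin L → Fin K := fun t => (e t : Fin K) with hbdef
  have hb : StrictMono b := by
    intro s t hst
    exact Subtype.coe_lt_coe.mpr (e.strictMono hst)
  set D : Finset (Fin L) := Finset.univ.filter (fun t => ∃ i, σ i = some (b t)) with hDdef
  set g : Fin L → Fin K :=
    fun t => if h : ∃ i, σ i = some (b t) then h.choose else Classical.arbitrary _ with hgdef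
  have hg : ∀ t ∈ D, σ (g t) = some (b t) := by
    intro t ht
    rw [hDdef] at ht
    simp only [Finset.mem_filter, Finset.mem_univ, true_and] at ht
    simp only [hgdef, dif_pos ht]
    exact ht.choose_spec
  have hginj : ∀ t ∈ D, ∀ t' ∈ D, g t = g t' → t = t' := by
    intro t ht t' ht' h
    have h1 := hg t ht
    have h2 := hg t' ht'
    rw [h] at h1
    rw [h2] at h1
    have hbtt : b t' = b t := by exact Option.some_injective _ h1
    have : e t' = e t := Subtype.ext hbtt
    exact (e.injective this).symm
  -- LHS equals sum over D
  set I : Finset (Fin K) := D.image g with hIdef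
  have himg : ∀ i : Fin K, (σ i).isSome → i ∈ I := by
    intro i hi
    obtain ⟨x, hx⟩ := Option.isSome_iff_exists.mp hi
    have hxA : x ∈ A := hσA i x hx
    set t : Fin L := e.symm ⟨x, hxA⟩ with htdef
    have hbt : b t = x := by
      simp only [hbdef, htdef]
      rw [OrderIso.apply_symm_apply]
    have htD : t ∈ D := by
      rw [hDdef]
      simp only [Finset.mem_filter, Finset.mem_univ, true_and]
      exact ⟨i, by rw [hbt]; exact hx⟩
    have hgt : σ (g t) = some x := by rw [hg t htD, hbt]
    have : g t = i := hinj _ _ x hgt hx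
    rw [hIdef]
    exact Finset.mem_image.mpr ⟨t, htD, this⟩
  have lhs_eq : ∑ i : Fin K, (σ i).elim 0 (W i) = ∑ t ∈ D, W (g t) (b t) := by
    have e1 : ∑ i : Fin K, (σ i).elim 0 (W i) = ∑ i ∈ I, (σ i).elim 0 (W i) := by
      symm
      apply Finset.sum_subset (Finset.subset_univ I)
      intro i _ hiI
      cases hσi : σ i with
      | none => rfl
      | some x =>
        exact absurd (himg i (by rw [hσi]; rfl)) hiI
    rw [e1, hIdef, Finset.sum_image hginj]
    apply Finset.sum_congr rfl
    intro t ht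
    rw [hg t ht]
    rfl
  -- extend g to an injection m : Fin L → Fin K
  have hcardI : I.card = D.card := Finset.card_image_of_injOn hginj
  have hcc : (Dᶜ : Finset (Fin L)).card ≤ (Iᶜ : Finset (Fin K)).card := by
    rw [Finset.card_compl, Finset.card_compl, hcardI]
    have hDL : D.card ≤ L := by
      simpa using D.card_le_univ
    simp only [Fintype.card_fin]
    omega
  obtain ⟨f⟩ : Nonempty (↥(Dᶜ : Finset (Fin L)) ↪ ↥(Iᶜ : Finset (Fin K))) := by
    apply Function.Embedding.nonempty_of_card_le
    rw [Fintype.card_coe, Fintype.card_coe]; exact hcc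
  set m : Fin L → Fin K :=
    fun t => if h : t ∈ D then g t else (f ⟨t, Finset.mem_compl.mpr h⟩ : Fin K) with hmdef
  have hmg : ∀ t ∈ D, m t = g t := by
    intro t ht; simp only [hmdef, dif_pos ht]
  have hm : Function.Injective m := by
    intro t t' h
    by_cases ht : t ∈ D <;> by_cases ht' : t' ∈ D
    · rw [hmg t ht, hmg t' ht'] at h
      exact hginj t ht t' ht' h
    · exfalso
      have h1 : m t ∈ I := by rw [hmg t ht]; exact Finset.mem_image.mpr ⟨t, ht, rfl⟩
      have h2 : m t' ∈ (Iᶜ : Finset (Fin K)) := by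
        simp only [hmdef, dif_neg ht']
        exact (f ⟨t', Finset.mem_compl.mpr ht'⟩).2
      rw [h] at h1
      exact (Finset.mem_compl.mp h2) h1
    · exfalso
      have h1 : m t' ∈ I := by rw [hmg t' ht']; exact Finset.mem_image.mpr ⟨t', ht', rfl⟩
      have h2 : m t ∈ (Iᶜ : Finset (Fin K)) := by
        simp only [hmdef, dif_neg ht]
        exact (f ⟨t, Finset.mem_compl.mpr ht⟩).2
      rw [← h] at h1
      exact (Finset.mem_compl.mp h2) h1
    · simp only [hmdef, dif_neg ht, dif_neg ht'] at h
      have := f.injective (Subtype.coe_injective h)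
      exact congrArg Subtype.val this
  rw [lhs_eq]
  calc ∑ t ∈ D, W (g t) (b t) = ∑ t ∈ D, W (m t) (b t) :=
        Finset.sum_congr rfl (fun t ht => by rw [hmg t ht])
    _ ≤ ∑ t : Fin L, W (m t) (b t) := by
        apply Finset.sum_le_sum_of_subset_of_nonneg (Finset.subset_univ D)
        intro t _ _
        exact hnn _ _
    _ ≤ ∑ t : Fin L, W (Fin.castLE hLK t) (b t) :=
        main_opt W hA hS hR L hLK b hb m hm
    _ = ∑ t : Fin L, W (Fin.castLE (by simpa using A.card_le_univ) t) (e t) :=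
        rfl
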